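/- Let Φ ∈ ℝ^{n×p} with constants δ_k and θ_{k,k}. Let h ∈ ℝᵖ with Φh = 0, let T be a set of k coordinates containing the k largest-magnitude entries of h, S = T^c, and suppose ‖h_S‖₁ ≤ ‖h_T‖₁. Then (1−δ_k)‖h_T‖₂² ≤ θ_{k,k}‖h_T‖₂². -/

import Mathlib

noncomputable def l2 {m : ℕ} (v : Fin m → ℝ) : ℝ := Real.sqrt (∑ i, (v i)^2)

def Sparse {m : ℕ} (k : ℕ) (v : Fin m → ℝ) : Prop :=
  ∃ s : Finset (Fin m), s.card ≤ k ∧ ∀ i ∉ s, v i = 0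

/-- Existence of a "top-m" subset for a real-valued function. -/
lemma exists_topk {ι : Type*} [DecidableEq ι] (f : ι → ℝ) :
    ∀ (m : ℕ) (S : Finset ι), m ≤ S.card →
    ∃ A ⊆ S, A.card = m ∧ ∀ i ∈ A, ∀ j ∈ S, j ∉ A → f j ≤ f i := by
  intro m
  induction m with
  | zero =>
    intro S _
    exact ⟨∅, Finset.empty_subset _, rfl, by simp⟩
  | succ m ih =>
    intro S hm
    have hne : S.Nonempty := Finset.card_pos.mp (by omega)
    obtain ⟨x, hxS, hx⟩ := S.exists_max_image f hne
    obtain ⟨A, hAsub, hAcard, hA⟩ := ih (S.erase x)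
      (by rw [Finset.card_erase_of_mem hxS]; omega)
    have hxA : x ∉ A := fun hxA => (Finset.mem_erase.1 (hAsub hxA)).1 rfl
    refine ⟨insert x A, ?_, ?_, ?_⟩
    · intro a ha
      rcases Finset.mem_insert.1 ha with rfl | ha
      · exact hxS
      · exact (Finset.erase_subset _ _) (hAsub ha)
    · rw [Finset.card_insert_of_notMem hxA, hAcard]
    · intro i hi j hjS hjA
      rcases Finset.mem_insert.1 hi with rfl | hiA
      · exact hx j hjS
      · refine hA i hiA j (Finset.mem_erase.2 ⟨?_, hjS⟩)
          (fun hj => hjA (Finset.mem_insert_of_mem hj))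
        rintro rfl
        exact hjA (Finset.mem_insert_self _ _)

/-- Key estimate: for `h` in the null space of `Φ` satisfying the cone condition on
the set `T` of the `k` largest-magnitude entries, `(1-δ_k)‖h_T‖₂² ≤ θ_{k,k}‖h_T‖₂²`. -/
theorem nullspace_key_estimate
    {n p k : ℕ} (Φ : Matrix (Fin n) (Fin p) ℝ) (δ θ : ℝ)
    (hδ0 : 0 ≤ δ) (hθ0 : 0 ≤ θ)
    (hδ : ∀ c : Fin p → ℝ, Sparse k c →
      Real.sqrt (1 - δ) * l2 c ≤ l2 (Φ.mulVec c) ∧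
      l2 (Φ.mulVec c) ≤ Real.sqrt (1 + δ) * l2 c)
    (hθ : ∀ c c' : Fin p → ℝ, Sparse k c → Sparse k c' → (∀ i, c i = 0 ∨ c' i = 0) →
      |dotProduct (Φ.mulVec c) (Φ.mulVec c')| ≤ θ * l2 c * l2 c')
    (h : Fin p → ℝ) (hnull : Φ.mulVec h = 0)
    (T : Finset (Fin p)) (hTcard : T.card = k)
    (hlarge : ∀ i ∈ T, ∀ j ∉ T, |h j| ≤ |h i|)
    (hcone : ∑ i ∈ Tᶜ, |h i| ≤ ∑ i ∈ T, |h i|) :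
    (1 - δ) * (l2 (fun i => if i ∈ T then h i else 0))^2
      ≤ θ * (l2 (fun i => if i ∈ T then h i else 0))^2 := by
  classical
  set hT : Fin p → ℝ := fun i => if i ∈ T then h i else 0 with hhT
  set L : ℝ := l2 hT with hLdef
  have hLnn : 0 ≤ L := hLdef ▸ Real.sqrt_nonneg _
  clear_value hT L
  -- trivial case: L = 0
  by_cases hL0 : L = 0
  · rw [hL0]; simp
  -- trivial case: δ ≥ 1
  by_cases hδ1 : 1 ≤ δ
  · exact mul_le_mul_of_nonneg_right (by linarith) (sq_nonneg L)
  push_neg at hδ1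
  have hLpos : 0 < L := lt_of_le_of_ne hLnn (Ne.symm hL0)
  -- T is nonempty, so k ≥ 1
  have hTne : T.Nonempty := by
    by_contra hc
    rw [Finset.not_nonempty_iff_eq_empty] at hc
    apply hL0
    have : hT = fun _ => 0 := by
      funext i; simp [hhT, hc]
    rw [hLdef, this, l2]
    simp
  have hk : 0 < k := by
    rw [← hTcard]; exact Finset.card_pos.mpr hTne
  -- L² = ∑_{i∈T} h i ^ 2
  have hLsq : L^2 = ∑ i ∈ T, (h i)^2 := by
    rw [hLdef, l2, Real.sq_sqrt (by positivity)]
    have : ∀ i : Fin p, (hT i)^2 = if i ∈ T then (h i)^2 else 0 := by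
      intro i; by_cases hi : i ∈ T <;> simp [hhT, hi]
    rw [Finset.sum_congr rfl (fun i _ => this i), Finset.sum_ite_mem,
      Finset.univ_inter]
  -- hT is k-sparse
  have hTsparse : Sparse k hT :=
    ⟨T, hTcard.le, fun i hi => by rw [hhT]; exact if_neg hi⟩
  -- the complementary part
  set hS : Fin p → ℝ := fun i => if i ∈ T then 0 else h i with hhS
  clear_value hS
  have hsum : hT + hS = h := by
    funext i
    by_cases hi : i ∈ T <;> simp [hhT, hhS, hi]
  have hΦS : Φ.mulVec hS = -Φ.mulVec hT := by
    have h0 : Φ.mulVec hT + Φ.mulVec hS = 0 := by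
      rw [← Matrix.mulVec_add, hsum, hnull]
    exact eq_neg_of_add_eq_zero_right h0
  -- l2 (Φ hT) ^ 2 = selfdot
  have hdotTT : dotProduct (Φ.mulVec hT) (Φ.mulVec hT) = l2 (Φ.mulVec hT)^2 := by
    rw [l2, Real.sq_sqrt (by positivity), dotProduct]
    exact Finset.sum_congr rfl (fun i _ => (sq (Φ.mulVec hT i)).symm)
  -- step 1 : (1-δ) L² ≤ ‖Φ hT‖²
  have step1 : (1 - δ) * L^2 ≤ l2 (Φ.mulVec hT)^2 := by
    have h1 := (hδ hT hTsparse).1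
    rw [← hLdef] at h1
    have h2 : (Real.sqrt (1 - δ) * L)^2 ≤ l2 (Φ.mulVec hT)^2 :=
      pow_le_pow_left₀ (mul_nonneg (Real.sqrt_nonneg _) hLnn) h1 2
    rwa [mul_pow, Real.sq_sqrt (by linarith)] at h2
  -- step 2 : ‖Φ hT‖² ≤ |⟨Φ hT, Φ hS⟩|
  have step2 : l2 (Φ.mulVec hT)^2 ≤ |dotProduct (Φ.mulVec hT) (Φ.mulVec hS)| := by
    have : dotProduct (Φ.mulVec hT) (Φ.mulVec hS)
        = -(l2 (Φ.mulVec hT)^2) := by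
      rw [hΦS, dotProduct_neg, hdotTT]
    rw [this, abs_neg]
    exact le_abs_self _
  -- the linear functional c
  set c : Fin p → ℝ := Matrix.vecMul (Φ.mulVec hT) Φ with hc
  clear_value c
  have hdotc : dotProduct (Φ.mulVec hT) (Φ.mulVec hS) = dotProduct c hS := by
    rw [hc]; exact Matrix.dotProduct_mulVec _ _ _
  -- step 3 : |⟨c, hS⟩| ≤ ∑_{j∈Tᶜ} |c j| |h j|
  have step3 : |dotProduct (Φ.mulVec hT) (Φ.mulVec hS)|
      ≤ ∑ j ∈ Tᶜ, |c j| * |h j| := by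
    rw [hdotc, dotProduct]
    refine le_trans (Finset.abs_sum_le_sum_abs _ _) ?_
    have : ∀ j : Fin p, |c j * hS j| = if j ∈ Tᶜ then |c j| * |h j| else 0 := by
      intro j
      rw [abs_mul, hhS]
      by_cases hj : j ∈ T <;> simp [hj]
    rw [Finset.sum_congr rfl (fun j _ => this j), Finset.sum_ite_mem,
      Finset.univ_inter]
  -- α : the threshold
  set α : ℝ := (∑ i ∈ T, |h i|) / k with hα
  clear_value α
  have hα0 : 0 ≤ α := by
    rw [hα]; positivity
  have hkα : (k : ℝ) * α = ∑ i ∈ T, |h i| := by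
    rw [hα]; field_simp
  have hhinf : ∀ j ∈ Tᶜ, |h j| ≤ α := by
    intro j hj
    rw [Finset.mem_compl] at hj
    have h1 : T.card • |h j| ≤ ∑ i ∈ T, |h i| :=
      Finset.card_nsmul_le_sum T _ _ (fun i hi => hlarge i hi j hj)
    rw [hTcard, nsmul_eq_mul] at h1
    rw [hα, le_div_iff₀ (by positivity)]
    linarith [h1]
  -- choose the top-m coordinates of |c| inside Tᶜ
  obtain ⟨A, hAsub, hAcard, hAtop⟩ :=
    exists_topk (fun j => |c j|) (min k Tᶜ.card) Tᶜ (min_le_right _ _)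
  -- key combinatorial bound
  have key : ∑ j ∈ Tᶜ, |c j| * |h j| ≤ α * ∑ i ∈ A, |c i| := by
    rcases le_or_gt Tᶜ.card k with hcle | hclt
    · -- A = Tᶜ
      have hAeq : A = Tᶜ := Finset.eq_of_subset_of_card_le hAsub
        (by rw [hAcard, min_eq_right hcle])
      rw [hAeq, Finset.mul_sum]
      refine Finset.sum_le_sum (fun j hj => ?_)
      rw [mul_comm α (|c j|)]
      exact mul_le_mul_of_nonneg_left (hhinf j hj) (abs_nonneg _)
    · have hAcard' : A.card = k := by rw [hAcard, min_eq_left hclt.le]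
      have hAne : A.Nonempty := Finset.card_pos.mp (by rw [hAcard']; exact hk)
      set μ : ℝ := A.inf' hAne (fun i => |c i|) with hμ
      have hμ0 : 0 ≤ μ := Finset.le_inf' hAne _ (fun i _ => abs_nonneg _)
      have hμle : ∀ i ∈ A, μ ≤ |c i| := fun i hi => Finset.inf'_le _ hi
      have hcleμ : ∀ j ∈ Tᶜ, j ∉ A → |c j| ≤ μ := by
        intro j hj hjA
        exact Finset.le_inf' hAne _ (fun i hi => hAtop i hi j hj hjA)
      have hsplit : ∑ j ∈ Tᶜ \ A, |c j| * |h j| + ∑ j ∈ A, |c j| * |h j|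
          = ∑ j ∈ Tᶜ, |c j| * |h j| := Finset.sum_sdiff hAsub
      have hsplit2 : ∑ j ∈ Tᶜ \ A, |h j| + ∑ j ∈ A, |h j| = ∑ j ∈ Tᶜ, |h j| :=
        Finset.sum_sdiff hAsub
      -- bound on the outside part
      have b1 : ∑ j ∈ Tᶜ \ A, |c j| * |h j| ≤ μ * ∑ j ∈ Tᶜ \ A, |h j| := by
        rw [Finset.mul_sum]
        refine Finset.sum_le_sum (fun j hj => ?_)
        have hj' := Finset.mem_sdiff.1 hj
        exact mul_le_mul_of_nonneg_right (hcleμ j hj'.1 hj'.2) (abs_nonneg _)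
      have b2 : ∑ j ∈ Tᶜ \ A, |h j| ≤ (k : ℝ) * α - ∑ j ∈ A, |h j| := by
        rw [hkα]; linarith
      -- bound on the inside part
      have b3 : ∑ i ∈ A, |c i| * |h i|
          ≤ ∑ i ∈ A, ((|c i| - μ) * α + μ * |h i|) := by
        refine Finset.sum_le_sum (fun i hi => ?_)
        have h1 : |h i| ≤ α := hhinf i (hAsub hi)
        have h2 : μ ≤ |c i| := hμle i hi
        have h3 : (|c i| - μ) * |h i| ≤ (|c i| - μ) * α :=
          mul_le_mul_of_nonneg_left h1 (by linarith)
        calc |c i| * |h i| = (|c i| - μ) * |h i| + μ * |h i| := by ring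
          _ ≤ (|c i| - μ) * α + μ * |h i| := by linarith
      have e1 : ∑ i ∈ A, ((|c i| - μ) * α + μ * |h i|)
          = α * ∑ i ∈ A, |c i| - (A.card : ℝ) * μ * α + μ * ∑ i ∈ A, |h i| := by
        rw [Finset.sum_add_distrib, ← Finset.mul_sum, ← Finset.sum_mul,
          Finset.sum_sub_distrib, Finset.sum_const, nsmul_eq_mul]
        ring
      have hsum0 : 0 ≤ ∑ j ∈ Tᶜ \ A, |h j| :=
        Finset.sum_nonneg (fun j _ => abs_nonneg _)
      have b1' : μ * ∑ j ∈ Tᶜ \ A, |h j| ≤ μ * ((k : ℝ) * α - ∑ j ∈ A, |h j|) :=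
        mul_le_mul_of_nonneg_left b2 hμ0
      rw [hAcard'] at e1
      have expand : μ * ((k:ℝ) * α - ∑ j ∈ A, |h j|)
          = μ * (k:ℝ) * α - μ * ∑ j ∈ A, |h j| := by ring
      have e2 : (k : ℝ) * μ * α = μ * (k:ℝ) * α := by ring
      linarith [hsplit, b1, b3, e1, b1', expand, e2]
  -- construct the sign vector w
  set w : Fin p → ℝ := fun i => if i ∈ A then (if 0 ≤ c i then α else -α) else 0 with hw
  clear_value w
  have hwsparse : Sparse k w :=
    ⟨A, by rw [hAcard]; exact min_le_left _ _, fun i hi => by rw [hw]; exact if_neg hi⟩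
  have hdisj : ∀ i, hT i = 0 ∨ w i = 0 := by
    intro i
    by_cases hi : i ∈ T
    · right
      have hiA : i ∉ A := fun hiA => (Finset.mem_compl.1 (hAsub hiA)) hi
      rw [hw]; exact if_neg hiA
    · left; rw [hhT]; exact if_neg hi
  -- ⟨c, w⟩ = α ∑_A |c i|
  have hdotw : dotProduct c w = α * ∑ i ∈ A, |c i| := by
    rw [dotProduct]
    have : ∀ i : Fin p, c i * w i = if i ∈ A then |c i| * α else 0 := by
      intro i
      rw [hw]
      by_cases hi : i ∈ A
      · simp only [hi, if_true]
        by_cases hci : 0 ≤ c i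
        · rw [if_pos hci, abs_of_nonneg hci]
        · push_neg at hci
          rw [if_neg (not_le.mpr hci), abs_of_neg hci]; ring
      · simp [hi]
    rw [Finset.sum_congr rfl (fun i _ => this i), Finset.sum_ite_mem,
      Finset.univ_inter, ← Finset.sum_mul]
    ring
  -- l2 w ≤ √k * α
  have hl2w : l2 w ≤ Real.sqrt k * α := by
    rw [l2]
    have hsq : ∀ i : Fin p, (w i)^2 = if i ∈ A then α^2 else 0 := by
      intro i
      rw [hw]
      by_cases hi : i ∈ A
      · simp only [hi, if_true]
        split_ifs <;> ring
      · simp [hi]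
    have : ∑ i, (w i)^2 = (A.card : ℝ) * α^2 := by
      rw [Finset.sum_congr rfl (fun i _ => hsq i), Finset.sum_ite_mem,
        Finset.univ_inter, Finset.sum_const, nsmul_eq_mul]
    rw [this]
    have hcard : (A.card : ℝ) ≤ k := by
      have := hAcard ▸ min_le_left k Tᶜ.card
      exact_mod_cast this
    calc Real.sqrt ((A.card : ℝ) * α^2) ≤ Real.sqrt ((k : ℝ) * α^2) :=
          Real.sqrt_le_sqrt (mul_le_mul_of_nonneg_right hcard (sq_nonneg α))
      _ = Real.sqrt k * α := by
          rw [Real.sqrt_mul (by positivity), Real.sqrt_sq hα0]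
  -- apply hθ
  have happθ : α * ∑ i ∈ A, |c i| ≤ θ * L * (Real.sqrt k * α) := by
    have h1 := hθ hT w hTsparse hwsparse hdisj
    have h2 : dotProduct (Φ.mulVec hT) (Φ.mulVec w) = α * ∑ i ∈ A, |c i| := by
      rw [Matrix.dotProduct_mulVec, ← hc, hdotw]
    calc α * ∑ i ∈ A, |c i| ≤ abs (α * ∑ i ∈ A, |c i|) := le_abs_self _
      _ = |dotProduct (Φ.mulVec hT) (Φ.mulVec w)| := by rw [h2]
      _ ≤ θ * l2 hT * l2 w := h1
      _ = θ * L * l2 w := by rw [hLdef]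
      _ ≤ θ * L * (Real.sqrt k * α) :=
          mul_le_mul_of_nonneg_left hl2w (mul_nonneg hθ0 hLnn)
  -- final: √k * α ≤ L
  have hfinal : Real.sqrt k * α ≤ L := by
    have hCS : (∑ i ∈ T, 1 * |h i|)^2 ≤ (∑ i ∈ T, (1:ℝ)^2) * ∑ i ∈ T, |h i|^2 :=
      Finset.sum_mul_sq_le_sq_mul_sq T _ _
    simp only [one_mul, one_pow, Finset.sum_const, nsmul_eq_mul, mul_one, sq_abs] at hCS
    rw [hTcard, ← hLsq] at hCS
    -- hCS : (∑ |h|)² ≤ k * L²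
    have hsqle : (Real.sqrt k * α)^2 ≤ L^2 := by
      rw [mul_pow, Real.sq_sqrt (by positivity : (0:ℝ) ≤ (k:ℝ))]
      have hkpos : (0:ℝ) < k := by exact_mod_cast hk
      have : (k:ℝ) * α^2 = (∑ i ∈ T, |h i|)^2 / k := by
        rw [hα]; field_simp
      rw [this, div_le_iff₀ hkpos, mul_comm (L^2) (k:ℝ)]
      exact hCS
    have h1 : 0 ≤ Real.sqrt k * α := mul_nonneg (Real.sqrt_nonneg _) hα0
    exact (pow_le_pow_iff_left₀ h1 hLnn two_ne_zero).mp hsqle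
  -- assemble everything
  have chain : (1 - δ) * L^2 ≤ θ * L * L := by
    calc (1 - δ) * L^2 ≤ l2 (Φ.mulVec hT)^2 := step1
      _ ≤ |dotProduct (Φ.mulVec hT) (Φ.mulVec hS)| := step2
      _ ≤ ∑ j ∈ Tᶜ, |c j| * |h j| := step3
      _ ≤ α * ∑ i ∈ A, |c i| := key
      _ ≤ θ * L * (Real.sqrt k * α) := happθ
      _ ≤ θ * L * L :=
          mul_le_mul_of_nonneg_left hfinal (mul_nonneg hθ0 hLnn)
  have hring : θ * L * L = θ * L^2 := by ring
  linarith [chain, hring]
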